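/- Let A ⊆ ℝ be an open invex set with respect to η, a, b ∈ A with a < a + η(b,a), f : A → ℝ differentiable with f' integrable on [a, a+η(b,a)], and suppose |f'| is preinvex on A. Then for all x ∈ [a, a+η(b,a)], |f(x) - (1/η(b,a)) ∫_a^{a+η(b,a)} f(u) du| ≤ (η(b,a)/6) { [3((x-a)/η(b,a))² - 2((x-a)/η(b,a))³ + 2((a+η(b,a)-x)/η(b,a))³] |f'(a)| + [1 - 3((x-a)/η(b,a))² + 4((x-a)/η(b,a))³] |f'(b)| }. -/

import Mathlib

open MeasureTheory intervalIntegral Set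

private lemma integral_quadratic (p q r s t : ℝ) :
    ∫ u in s..t, (p * u ^ 2 + q * u + r) =
      p * (t ^ 3 - s ^ 3) / 3 + q * (t ^ 2 - s ^ 2) / 2 + r * (t - s) := by
  rw [integral_eq_sub_of_hasDerivAt (f := fun u => p * u ^ 3 / 3 + q * u ^ 2 / 2 + r * u)
      (f' := fun u => p * u ^ 2 + q * u + r)]
  · ring
  · intro u _
    have h1 := (((hasDerivAt_pow 3 u).const_mul p).div_const 3).add
        ((((hasDerivAt_pow 2 u).const_mul q).div_const 2).add ((hasDerivAt_id u).const_mul r))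
    convert h1 using 1
    · funext v; simp only [id_eq, Pi.add_apply]; ring
    · push_cast; ring
  · exact (by fun_prop : Continuous fun u : ℝ => p * u ^ 2 + q * u + r).intervalIntegrable _ _

theorem ostrowski_preinvex
    (A : Set ℝ) (η : ℝ → ℝ → ℝ) (a b : ℝ) (f f' : ℝ → ℝ)
    (hA : IsOpen A)
    (hinv : ∀ x ∈ A, ∀ y ∈ A, ∀ t ∈ Icc (0:ℝ) 1, x + t * η y x ∈ A)
    (ha : a ∈ A) (hb : b ∈ A) (hab : a < a + η b a)
    (hf : ∀ x ∈ A, HasDerivAt f (f' x) x)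
    (hint : IntervalIntegrable f' volume a (a + η b a))
    (hpre : ∀ x ∈ A, ∀ y ∈ A, ∀ t ∈ Icc (0:ℝ) 1,
      |f' (x + t * η y x)| ≤ (1 - t) * |f' x| + t * |f' y|) :
    ∀ x ∈ Icc a (a + η b a),
      |f x - (1 / η b a) * ∫ u in a..(a + η b a), f u| ≤
        (η b a / 6) *
          ((3 * ((x - a) / η b a) ^ 2 - 2 * ((x - a) / η b a) ^ 3 +
              2 * ((a + η b a - x) / η b a) ^ 3) * |f' a| +
           (1 - 3 * ((x - a) / η b a) ^ 2 + 4 * ((x - a) / η b a) ^ 3) * |f' b|) := by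
  intro x hx
  set h := η b a with hhdef
  have hh : 0 < h := by linarith
  obtain ⟨hax, hxb⟩ := hx
  have haab : a ≤ a + h := hab.le
  have hax' : a ≤ a + h := haab
  -- the segment lies in A
  have hsub : Icc a (a + h) ⊆ A := by
    intro u hu
    have ht : (u - a) / h ∈ Icc (0:ℝ) 1 :=
      ⟨div_nonneg (by linarith [hu.1]) hh.le, (div_le_one hh).2 (by linarith [hu.2])⟩
    have key := hinv a ha b hb _ ht
    have : a + (u - a) / h * h = u := by field_simp; ring
    rwa [this] at key
  set C := |f' a| with hC
  set D := |f' b| with hD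
  set E := (D - C) / h with hE
  set g : ℝ → ℝ := fun u => C + (u - a) * E with hg
  -- preinvexity bound
  have hbound : ∀ u ∈ Icc a (a + h), |f' u| ≤ g u := by
    intro u hu
    have ht : (u - a) / h ∈ Icc (0:ℝ) 1 :=
      ⟨div_nonneg (by linarith [hu.1]) hh.le, (div_le_one hh).2 (by linarith [hu.2])⟩
    have key := hpre a ha b hb _ ht
    have heq : a + (u - a) / h * h = u := by field_simp; ring
    rw [heq] at key
    have heq2 : (1 - (u - a) / h) * |f' a| + (u - a) / h * |f' b| = g u := by
      simp only [hg, hE, hC, hD]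
      field_simp
      ring
    exact le_of_le_of_eq key heq2
  have hgc : Continuous g := by fun_prop
  -- continuity and integrability
  have hfc : ContinuousOn f (Icc a (a + h)) := fun u hu =>
    ((hf u (hsub hu)).continuousAt).continuousWithinAt
  have hfInt : IntervalIntegrable f volume a (a + h) := by
    apply ContinuousOn.intervalIntegrable
    rwa [uIcc_of_le haab]
  have hfInt1 : IntervalIntegrable f volume a x :=
    hfInt.mono_set (by rw [uIcc_of_le hax, uIcc_of_le haab]; exact Icc_subset_Icc_right hxb)
  have hfInt2 : IntervalIntegrable f volume x (a + h) :=
    hfInt.mono_set (by rw [uIcc_of_le hxb, uIcc_of_le haab]; exact Icc_subset_Icc_left hax)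
  have hf'1 : IntervalIntegrable f' volume a x :=
    hint.mono_set (by rw [uIcc_of_le hax, uIcc_of_le haab]; exact Icc_subset_Icc_right hxb)
  have hf'2 : IntervalIntegrable f' volume x (a + h) :=
    hint.mono_set (by rw [uIcc_of_le hxb, uIcc_of_le haab]; exact Icc_subset_Icc_left hax)
  -- Montgomery identity pieces
  have hmem1 : ∀ u ∈ uIcc a x, u ∈ A := by
    intro u hu
    rw [uIcc_of_le hax] at hu
    exact hsub (Icc_subset_Icc_right hxb hu)
  have hmem2 : ∀ u ∈ uIcc x (a + h), u ∈ A := by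
    intro u hu
    rw [uIcc_of_le hxb] at hu
    exact hsub (Icc_subset_Icc_left hax hu)
  have hI1 : ∫ u in a..x, (u - a) * f' u = (x - a) * f x - ∫ u in a..x, f u := by
    have key := integral_mul_deriv_eq_deriv_mul (a := a) (b := x)
      (u := fun u => u - a) (v := f) (u' := fun _ => (1:ℝ)) (v' := f')
      (fun u _ => (hasDerivAt_id u).sub_const a)
      (fun u hu => hf u (hmem1 u hu)) intervalIntegrable_const hf'1
    simp only [sub_self, zero_mul, one_mul] at key
    linarith [key]
  have hI2 : ∫ u in x..(a + h), (u - (a + h)) * f' u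
      = (a + h - x) * f x - ∫ u in x..(a + h), f u := by
    have key := integral_mul_deriv_eq_deriv_mul (a := x) (b := a + h)
      (u := fun u => u - (a + h)) (v := f) (u' := fun _ => (1:ℝ)) (v' := f')
      (fun u _ => (hasDerivAt_id u).sub_const (a + h))
      (fun u hu => hf u (hmem2 u hu)) intervalIntegrable_const hf'2
    simp only [sub_self, zero_mul, one_mul] at key
    have : (x - (a + h)) * f x = -((a + h - x) * f x) := by ring
    linarith [key]
  have hsplit : (∫ u in a..(a + h), f u) = (∫ u in a..x, f u) + ∫ u in x..(a + h), f u :=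
    (integral_add_adjacent_intervals hfInt1 hfInt2).symm
  have hiden : f x - (1 / h) * ∫ u in a..(a + h), f u
      = (1 / h) * ((∫ u in a..x, (u - a) * f' u)
        + ∫ u in x..(a + h), (u - (a + h)) * f' u) := by
    rw [hsplit, hI1, hI2]
    field_simp
    ring
  -- bound |I1|
  have hint1a : IntervalIntegrable (fun u => (u - a) * f' u) volume a x :=
    hf'1.continuousOn_mul (by fun_prop)
  have hint2a : IntervalIntegrable (fun u => (u - (a + h)) * f' u) volume x (a + h) :=
    hf'2.continuousOn_mul (by fun_prop)
  have hB1 : |∫ u in a..x, (u - a) * f' u| ≤ ∫ u in a..x, (u - a) * g u := by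
    calc |∫ u in a..x, (u - a) * f' u| ≤ ∫ u in a..x, |(u - a) * f' u| := abs_integral_le_integral_abs hax
      _ ≤ ∫ u in a..x, (u - a) * g u := by
          apply integral_mono_on hax hint1a.abs
            (((continuous_id.sub continuous_const).mul hgc).intervalIntegrable _ _)
          intro u hu
          have hu' : u ∈ Icc a (a + h) := Icc_subset_Icc_right hxb hu
          rw [abs_mul, abs_of_nonneg (by linarith [hu.1] : (0:ℝ) ≤ u - a)]
          exact mul_le_mul_of_nonneg_left (hbound u hu') (by linarith [hu.1])
  have hB2 : |∫ u in x..(a + h), (u - (a + h)) * f' u| ≤ ∫ u in x..(a + h), (a + h - u) * g u := by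
    calc |∫ u in x..(a + h), (u - (a + h)) * f' u| ≤ ∫ u in x..(a + h), |(u - (a + h)) * f' u| := abs_integral_le_integral_abs hxb
      _ ≤ ∫ u in x..(a + h), (a + h - u) * g u := by
          apply integral_mono_on hxb hint2a.abs
            (((continuous_const.sub continuous_id).mul hgc).intervalIntegrable _ _)
          intro u hu
          have hu' : u ∈ Icc a (a + h) := Icc_subset_Icc_left hax hu
          rw [abs_mul, abs_sub_comm, abs_of_nonneg (by linarith [hu.2] : (0:ℝ) ≤ a + h - u)]
          exact mul_le_mul_of_nonneg_left (hbound u hu') (by linarith [hu.2])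
  -- evaluate the polynomial integrals
  have hV1 : (∫ u in a..x, (u - a) * g u)
      = E * (x ^ 3 - a ^ 3) / 3 + (C - 2 * a * E) * (x ^ 2 - a ^ 2) / 2
        + (a ^ 2 * E - a * C) * (x - a) := by
    rw [show (∫ u in a..x, (u - a) * g u)
        = ∫ u in a..x, (E * u ^ 2 + (C - 2 * a * E) * u + (a ^ 2 * E - a * C)) from
      intervalIntegral.integral_congr (fun u _ => by simp only [hg]; ring)]
    exact integral_quadratic _ _ _ _ _
  have hV2 : (∫ u in x..(a + h), (a + h - u) * g u)
      = (-E) * ((a + h) ^ 3 - x ^ 3) / 3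
        + ((2 * a + h) * E - C) * ((a + h) ^ 2 - x ^ 2) / 2
        + ((a + h) * C - a * (a + h) * E) * (a + h - x) := by
    rw [show (∫ u in x..(a + h), (a + h - u) * g u)
        = ∫ u in x..(a + h), ((-E) * u ^ 2 + ((2 * a + h) * E - C) * u
            + ((a + h) * C - a * (a + h) * E)) from
      intervalIntegral.integral_congr (fun u _ => by simp only [hg]; ring)]
    exact integral_quadratic _ _ _ _ _
  -- put everything together
  rw [hiden, abs_mul, abs_of_pos (div_pos one_pos hh)]
  have hchain : (1 / h) * |(∫ u in a..x, (u - a) * f' u)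
        + ∫ u in x..(a + h), (u - (a + h)) * f' u|
      ≤ (1 / h) * ((∫ u in a..x, (u - a) * g u)
        + ∫ u in x..(a + h), (a + h - u) * g u) := by
    apply mul_le_mul_of_nonneg_left _ (div_pos one_pos hh).le
    calc |(∫ u in a..x, (u - a) * f' u) + ∫ u in x..(a + h), (u - (a + h)) * f' u|
        ≤ |∫ u in a..x, (u - a) * f' u| + |∫ u in x..(a + h), (u - (a + h)) * f' u| :=
          abs_add_le _ _
      _ ≤ _ := add_le_add hB1 hB2
  refine hchain.trans (le_of_eq ?_)
  rw [hV1, hV2, hE]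
  field_simp
  ring
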